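/- For any two density matrices ρ, σ on a finite-dimensional Hilbert space, the super-fidelity is at most 1: Tr(ρσ) + √(1 - Tr ρ²)·√(1 - Tr σ²) ≤ 1. -/

import Mathlib

open Matrix
open scoped ComplexOrder

private lemma herm_trace_mul_self {n : ℕ} {A : Matrix (Fin n) (Fin n) ℂ}
    (hA : A.IsHermitian) :
    (A * A).trace = ∑ i, ((hA.eigenvalues i : ℂ)) ^ 2 := by
  set U : Matrix (Fin n) (Fin n) ℂ := (hA.eigenvectorUnitary : Matrix (Fin n) (Fin n) ℂ) with hU
  set D : Matrix (Fin n) (Fin n) ℂ := diagonal (RCLike.ofReal ∘ hA.eigenvalues) with hD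
  have h1 : star U * U = 1 := Matrix.mem_unitaryGroup_iff'.mp hA.eigenvectorUnitary.2
  have hAeq : A = U * D * star U := hA.spectral_theorem
  have : A * A = U * (D * D) * star U := by
    rw [hAeq]
    rw [show U * D * star U * (U * D * star U) = U * (D * ((star U * U) * D)) * star U by
      noncomm_ring]
    rw [h1, one_mul]
  rw [this, Matrix.trace_mul_cycle, ← mul_assoc, h1, one_mul]
  simp [hD, Matrix.trace, Matrix.diagonal_mul_diagonal, Function.comp, sq]

private lemma trace_sq_re {n : ℕ} {A : Matrix (Fin n) (Fin n) ℂ}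
    (hA : A.IsHermitian) :
    ((A * A).trace).re = ∑ i, (hA.eigenvalues i) ^ 2 := by
  rw [herm_trace_mul_self hA]
  norm_cast

private lemma trace_sq_le_one {n : ℕ} {A : Matrix (Fin n) (Fin n) ℂ}
    (hA : A.PosSemidef) (htr : A.trace = 1) :
    ((A * A).trace).re ≤ 1 := by
  have hsum : ∑ i, hA.1.eigenvalues i = 1 := by
    have : A = (hA.1.eigenvectorUnitary : Matrix (Fin n) (Fin n) ℂ) *
        diagonal (RCLike.ofReal ∘ hA.1.eigenvalues) *
        star (hA.1.eigenvectorUnitary : Matrix (Fin n) (Fin n) ℂ) := hA.1.spectral_theorem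
    have h1 : star (hA.1.eigenvectorUnitary : Matrix (Fin n) (Fin n) ℂ) *
        (hA.1.eigenvectorUnitary : Matrix (Fin n) (Fin n) ℂ) = 1 :=
      Matrix.mem_unitaryGroup_iff'.mp hA.1.eigenvectorUnitary.2
    have htr' : A.trace = ∑ i, ((hA.1.eigenvalues i : ℂ)) := by
      conv_lhs => rw [this]
      rw [Matrix.trace_mul_cycle, h1, one_mul]
      simp [Matrix.trace, Function.comp]
    rw [htr] at htr'
    have := congrArg Complex.re htr'.symm
    rw [Complex.re_sum] at this
    simpa using this
  rw [trace_sq_re hA.1]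
  calc ∑ i, (hA.1.eigenvalues i) ^ 2 ≤ (∑ i, hA.1.eigenvalues i) ^ 2 :=
        Finset.sum_sq_le_sq_sum_of_nonneg (fun i _ => hA.eigenvalues_nonneg i)
    _ = 1 := by rw [hsum]; norm_num

private lemma trace_sq_nonneg {n : ℕ} {A : Matrix (Fin n) (Fin n) ℂ}
    (hA : A.IsHermitian) : 0 ≤ ((A * A).trace).re := by
  rw [trace_sq_re hA]
  exact Finset.sum_nonneg fun i _ => sq_nonneg _

private lemma trace_sq_eq_sum_norm {n : ℕ} {A : Matrix (Fin n) (Fin n) ℂ}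
    (hA : A.IsHermitian) :
    ((A * A).trace).re = ∑ p : Fin n × Fin n, ‖A p.1 p.2‖ ^ 2 := by
  have : (A * A).trace = ∑ i, ∑ j, A i j * A j i := by
    simp [Matrix.trace, Matrix.mul_apply, Matrix.diag]
  rw [this]
  rw [Fintype.sum_prod_type]
  rw [Complex.re_sum]
  refine Finset.sum_congr rfl fun i _ => ?_
  rw [Complex.re_sum]
  refine Finset.sum_congr rfl fun j _ => ?_
  have hji : A j i = starRingEnd ℂ (A i j) := by
    have := congrFun (congrFun hA j) i
    simpa [Matrix.conjTranspose_apply] using this.symm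
  rw [hji, Complex.mul_conj]
  simp [Complex.sq_norm]

private lemma cs_trace {n : ℕ} {A B : Matrix (Fin n) (Fin n) ℂ}
    (hA : A.IsHermitian) (hB : B.IsHermitian) :
    ((A * B).trace).re ≤
      Real.sqrt (((A * A).trace).re) * Real.sqrt (((B * B).trace).re) := by
  have hform : ((A * B).trace).re = ∑ p : Fin n × Fin n, (A p.1 p.2 * starRingEnd ℂ (B p.1 p.2)).re := by
    have : (A * B).trace = ∑ i, ∑ j, A i j * B j i := by
      simp [Matrix.trace, Matrix.mul_apply, Matrix.diag]
    rw [this, Fintype.sum_prod_type, Complex.re_sum]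
    refine Finset.sum_congr rfl fun i _ => ?_
    rw [Complex.re_sum]
    refine Finset.sum_congr rfl fun j _ => ?_
    have hji : B j i = starRingEnd ℂ (B i j) := by
      have := congrFun (congrFun hB j) i
      simpa [Matrix.conjTranspose_apply] using this.symm
    rw [hji]
  have step1 : ((A * B).trace).re ≤ ∑ p : Fin n × Fin n, ‖A p.1 p.2‖ * ‖B p.1 p.2‖ := by
    rw [hform]
    refine Finset.sum_le_sum fun p _ => ?_
    calc (A p.1 p.2 * starRingEnd ℂ (B p.1 p.2)).re
        ≤ ‖A p.1 p.2 * starRingEnd ℂ (B p.1 p.2)‖ := Complex.re_le_norm _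
      _ = ‖A p.1 p.2‖ * ‖B p.1 p.2‖ := by rw [norm_mul]; simp
  have step2 : (∑ p : Fin n × Fin n, ‖A p.1 p.2‖ * ‖B p.1 p.2‖) ^ 2 ≤
      (∑ p : Fin n × Fin n, ‖A p.1 p.2‖ ^ 2) * ∑ p : Fin n × Fin n, ‖B p.1 p.2‖ ^ 2 :=
    Finset.sum_mul_sq_le_sq_mul_sq _ _ _
  have hs_nonneg : 0 ≤ ∑ p : Fin n × Fin n, ‖A p.1 p.2‖ * ‖B p.1 p.2‖ :=
    Finset.sum_nonneg fun p _ => mul_nonneg (norm_nonneg _) (norm_nonneg _)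
  have step3 : ∑ p : Fin n × Fin n, ‖A p.1 p.2‖ * ‖B p.1 p.2‖ ≤
      Real.sqrt (((A * A).trace).re) * Real.sqrt (((B * B).trace).re) := by
    rw [trace_sq_eq_sum_norm hA, trace_sq_eq_sum_norm hB, ← Real.sqrt_mul
      (Finset.sum_nonneg fun p _ => sq_nonneg _)]
    exact (Real.le_sqrt hs_nonneg (by positivity)).mpr step2
  linarith

/-- For any two density matrices `ρ, σ` on a finite-dimensional
Hilbert space, the super-fidelity is at most `1`:
`Tr(ρσ) + √(1 - Tr ρ²)·√(1 - Tr σ²) ≤ 1`. -/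
theorem stmt3 {n : ℕ} (ρ σ : Matrix (Fin n) (Fin n) ℂ)
    (hρ : ρ.PosSemidef) (hρtr : ρ.trace = 1)
    (hσ : σ.PosSemidef) (hσtr : σ.trace = 1) :
    ((ρ * σ).trace).re +
      Real.sqrt (1 - ((ρ * ρ).trace).re) * Real.sqrt (1 - ((σ * σ).trace).re)
      ≤ 1 := by
  set a := ((ρ * ρ).trace).re with ha
  set b := ((σ * σ).trace).re with hb
  have ha0 : 0 ≤ a := trace_sq_nonneg hρ.1
  have hb0 : 0 ≤ b := trace_sq_nonneg hσ.1
  have ha1 : a ≤ 1 := trace_sq_le_one hρ hρtr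
  have hb1 : b ≤ 1 := trace_sq_le_one hσ hσtr
  have ht : ((ρ * σ).trace).re ≤ Real.sqrt a * Real.sqrt b := cs_trace hρ.1 hσ.1
  set u := Real.sqrt (1 - a) with hu
  set v := Real.sqrt (1 - b) with hv
  have hu2 : u ^ 2 = 1 - a := Real.sq_sqrt (by linarith)
  have hv2 : v ^ 2 = 1 - b := Real.sq_sqrt (by linarith)
  have hu0 : 0 ≤ u := Real.sqrt_nonneg _
  have hv0 : 0 ≤ v := Real.sqrt_nonneg _
  have hu1 : u ≤ 1 := by
    rw [hu]; exact Real.sqrt_le_one.mpr (by linarith)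
  have hv1 : v ≤ 1 := by
    rw [hv]; exact Real.sqrt_le_one.mpr (by linarith)
  have huv : u * v ≤ 1 := mul_le_one₀ hu1 hv0 hv1
  have hab : a * b ≤ (1 - u * v) ^ 2 := by nlinarith [sq_nonneg (u - v)]
  have hkey : Real.sqrt a * Real.sqrt b ≤ 1 - u * v := by
    rw [← Real.sqrt_mul ha0]
    calc Real.sqrt (a * b) ≤ Real.sqrt ((1 - u * v) ^ 2) := Real.sqrt_le_sqrt hab
      _ = 1 - u * v := Real.sqrt_sq (by linarith)
  linarith
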